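/- Let (α, v) be a cocycle crossed action of a group G on a group U, let H ⊴ G be a normal subgroup with v(m,n) = 1 for all m, n ∈ H, let s : G/H → G be a section with s(ē) = e, and set m(p,q) := s(pq)⁻¹ s(p) s(q) ∈ H and c(p,q) := v(s(p), s(q)) · v(s(pq), m(p,q))⁻¹. Then for all p, q, r ∈ G/H the following identity holds in U: c(p,q) · α_{s(pq)}( δv(s(r), m(p,q))⁻¹ ) · c(pq, r) = α_{s(p)}( c(q,r) ) · c(p, qr), where δv(g,n) = v(g, g⁻¹ng) v(n,g)⁻¹. -/
import Mathlib


/-- 2-cocycle-type identity for the quasi cocycle crossed action of `Q = G/H`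
(assuming the 2-cocycle `v` is trivial on `H`):
`c(p,q)·α_{s(pq)}(δv(s(r),m(p,q))⁻¹)·c(pq,r) = α_{s(p)}(c(q,r))·c(p,qr)`. -/
theorem stmt4 {G U : Type*} [Group G] [Group U]
    (α : G → MulAut U) (v : G → G → U)
    (hα1 : α 1 = 1)
    (hv1 : ∀ h : G, v 1 h = 1) (hv2 : ∀ g : G, v g 1 = 1)
    (hAd : ∀ g h : G, ∀ x : U, α g (α h x) = v g h * α (g * h) x * (v g h)⁻¹)
    (hcoc : ∀ g h k : G, v g h * v (g * h) k = α g (v h k) * v g (h * k))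
    (H : Subgroup G) [H.Normal]
    (hvH : ∀ m n : G, m ∈ H → n ∈ H → v m n = 1)
    (s : G ⧸ H → G)
    (hs : ∀ p : G ⧸ H, (QuotientGroup.mk (s p) : G ⧸ H) = p)
    (hse : s 1 = 1)
    (m : G ⧸ H → G ⧸ H → G)
    (hm : ∀ p q : G ⧸ H, m p q = (s (p * q))⁻¹ * s p * s q)
    (c : G ⧸ H → G ⧸ H → U)
    (hc : ∀ p q : G ⧸ H, c p q = v (s p) (s q) * (v (s (p * q)) (m p q))⁻¹)
    (δv : G → G → U)
    (hδ : ∀ g n : G, δv g n = v g (g⁻¹ * n * g) * (v n g)⁻¹) :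
    ∀ p q r : G ⧸ H,
      c p q * α (s (p * q)) ((δv (s r) (m p q))⁻¹) * c (p * q) r =
        α (s p) (c q r) * c p (q * r) := by

  have hconj : ∀ g h k : G, α g (v h k) = v g h * v (g * h) k * (v g (h * k))⁻¹ :=
    fun g h k => eq_mul_inv_of_mul_eq (hcoc g h k).symm
  have hmemH : ∀ p q : G ⧸ H, m p q ∈ H := by
    intro p q
    have : ((QuotientGroup.mk (m p q)) : G ⧸ H) = 1 := by
      rw [hm]
      simp only [QuotientGroup.mk_mul, QuotientGroup.mk_inv, hs]
      group
    exact (QuotientGroup.eq_one_iff _).mp this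
  intro p q r
  have hpa : p * (q * r) = p * q * r := (mul_assoc p q r).symm
  -- argument normalizations in G
  have hF1 : s (p * q) * m p q = s p * s q := by rw [hm]; group
  have hF2 : s r * ((s r)⁻¹ * m p q * s r) = m p q * s r := by group
  have hF3 : s (p * q * r) * m (p * q) r = s (p * q) * s r := by rw [hm]; group
  have hF4 : s (p * q * r) * m p (q * r) = s p * s (q * r) := by
    rw [hm, hpa]; group
  have hF5 : s (q * r) * m q r = s q * s r := by rw [hm]; group
  have hF6 : m (p * q) r * ((s r)⁻¹ * m p q * s r) = m p (q * r) * m q r := by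
    rw [hm p q, hm (p*q) r, hm p (q*r), hm q r, hpa]; group
  -- membership facts
  have hmem2 : (s r)⁻¹ * m p q * s r ∈ H := by
    have := Subgroup.Normal.conj_mem ‹H.Normal› _ (hmemH p q) (s r)⁻¹
    simpa using this
  -- key rewrites for the two "long" v-terms
  have hA : v (s (p * q) * s r) ((s r)⁻¹ * m p q * s r)
      = (v (s (p * q * r)) (m (p * q) r))⁻¹
        * v (s (p * q * r)) (m p (q * r) * m q r) := by
    have h := hcoc (s (p * q * r)) (m (p * q) r) ((s r)⁻¹ * m p q * s r)
    rw [hvH _ _ (hmemH (p*q) r) hmem2, map_one, one_mul, hF3, hF6] at h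
    rw [← h]; group
  have hB : v (s p * s (q * r)) (m q r)
      = (v (s (p * q * r)) (m p (q * r)))⁻¹
        * v (s (p * q * r)) (m p (q * r) * m q r) := by
    have h := hcoc (s (p * q * r)) (m p (q * r)) (m q r)
    rw [hvH _ _ (hmemH p (q*r)) (hmemH q r), map_one, one_mul, hF4] at h
    rw [← h]; group
  rw [hc p q, hc (p*q) r, hc q r, hc p (q*r), hδ, hpa]
  simp only [mul_inv_rev, inv_inv, map_mul, map_inv]
  simp only [hconj]
  rw [hF1, hF2, hF5, hA, hB]
  group
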